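/- For every n ∈ ℕ and every finite sequence (i_0, …, i_n) of positive integers, the Lebesgue measure of the cylinder I_{i_0…i_n} = ⋂_{k=0}^n T^{−k}([i_k − 1, i_k]) satisfies λ(I_{i_0…i_n}) ≤ 5^{−n}. -/

import Mathlib

open Set Filter

noncomputable section

/-- `ell n = min {k ∈ ℤ⁺ : n ≤ 4^k}`. -/
def ell (n : ℕ) : ℕ := sInf {k : ℕ | 1 ≤ k ∧ n ≤ 4 ^ k}

/-- The value of the map `T` at the nonnegative integer `n`:
`0` if `n` is even and `4 ^ ℓ(n) + 1` if `n` is odd. -/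
def Tval (n : ℕ) : ℝ := if Even n then 0 else 4 ^ ell n + 1

/-- `T : [0,∞) → [0,∞)` is the unique continuous map which is affine on each
integer interval `[n-1, n]` and takes the value `Tval n` at every nonnegative
integer `n`.  This is expressed by linear interpolation on each `[n, n+1]`. -/
def IsT (T : ℝ → ℝ) : Prop :=
  ∀ n : ℕ, ∀ x ∈ Set.Icc (n : ℝ) (n + 1),
    T x = ((n : ℝ) + 1 - x) * Tval n + (x - (n : ℝ)) * Tval (n + 1)

/-- `(x_k)` is a `δ`-pseudo orbit of `T` in `[0,∞)`. -/
def IsPseudoOrbit (T : ℝ → ℝ) (δ : ℝ) (x : ℕ → ℝ) : Prop :=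
  (∀ k, 0 ≤ x k) ∧ ∀ k, |x (k + 1) - T (x k)| < δ

open MeasureTheory
lemma ell_mem (n : ℕ) : 1 ≤ ell n ∧ n ≤ 4 ^ ell n := by
  have h : ({k : ℕ | 1 ≤ k ∧ n ≤ 4 ^ k}).Nonempty := by
    refine ⟨max 1 n, le_max_left _ _, ?_⟩
    calc n ≤ 4 ^ n := Nat.le_of_lt (Nat.lt_pow_self (n := n) (by norm_num))
    _ ≤ 4 ^ max 1 n := Nat.pow_le_pow_right (by norm_num) (le_max_right _ _)
  exact Nat.sInf_mem h

lemma Tval_odd_ge (n : ℕ) (h : ¬ Even n) : (5 : ℝ) ≤ Tval n := by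
  rw [Tval, if_neg h]
  have h1 : (4:ℝ)^1 ≤ 4 ^ ell n :=
    pow_le_pow_right₀ (by norm_num) (ell_mem n).1
  nlinarith

lemma slope_ge (m : ℕ) : (5 : ℝ) ≤ |Tval (m+1) - Tval m| := by
  rcases Nat.even_or_odd m with he | ho
  · have h0 : Tval m = 0 := by rw [Tval, if_pos he]
    have h1 : (5:ℝ) ≤ Tval (m+1) := Tval_odd_ge _ (by simp [Nat.even_add_one, he])
    rw [h0, sub_zero, abs_of_nonneg (by linarith)]; exact h1
  · have h0 : Tval (m+1) = 0 := by
      rw [Tval, if_pos (by simpa [Nat.even_add_one] using (Nat.not_even_iff_odd.mpr ho))]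
    have h1 : (5:ℝ) ≤ Tval m := Tval_odd_ge _ (Nat.not_even_iff_odd.mpr ho)
    rw [h0, zero_sub, abs_neg, abs_of_nonneg (by linarith)]; exact h1

/-- volume of preimage of affine map -/
lemma vol_affine_preimage (a b : ℝ) (ha : a ≠ 0) (S : Set ℝ) :
    volume ((fun x => a * x + b) ⁻¹' S) = ENNReal.ofReal |a⁻¹| * volume S := by
  have : (fun x : ℝ => a * x + b) = (fun y : ℝ => y + b) ∘ (fun x => a * x) := rfl
  rw [this, Set.preimage_comp, Real.volume_preimage_mul_left ha,
    measure_preimage_add_right volume b S]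

lemma step_lemma (T : ℝ → ℝ) (hT : IsT T) (m : ℕ) (S : Set ℝ) :
    volume (Set.Icc (m : ℝ) (m+1) ∩ T ⁻¹' S) ≤ 5⁻¹ * volume S := by
  set a : ℝ := Tval (m+1) - Tval m with ha
  have hslope : (5:ℝ) ≤ |a| := slope_ge m
  have ha0 : a ≠ 0 := by
    intro h; rw [h] at hslope; simp at hslope; linarith
  set b : ℝ := Tval m - a * m with hb
  have key : Set.Icc (m : ℝ) (m+1) ∩ T ⁻¹' S ⊆ (fun x => a * x + b) ⁻¹' S := by
    intro x ⟨hx1, hx2⟩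
    have := hT m x hx1
    simp only [Set.mem_preimage] at hx2 ⊢
    have heq : a * x + b = T x := by rw [this, ha, hb]; ring
    rw [heq]; exact hx2
  calc volume (Set.Icc (m : ℝ) (m+1) ∩ T ⁻¹' S)
      ≤ volume ((fun x => a * x + b) ⁻¹' S) := measure_mono key
    _ = ENNReal.ofReal |a⁻¹| * volume S := vol_affine_preimage a b ha0 S
    _ ≤ 5⁻¹ * volume S := by
        gcongr
        rw [abs_inv]
        rw [show (5 : ENNReal)⁻¹ = ENNReal.ofReal (5⁻¹ : ℝ) by
          rw [ENNReal.ofReal_inv_of_pos (by norm_num)]; norm_num]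
        apply ENNReal.ofReal_le_ofReal
        apply inv_anti₀ (by norm_num) hslope

/-- The cylinder `I_{i₀…iₙ} = ⋂_{k=0}^{n} T^{-k}([i_k - 1, i_k])` has Lebesgue
measure at most `5 ^ (-n)`. -/
theorem cylinder_measure_le (T : ℝ → ℝ) (hT : IsT T) (n : ℕ)
    (i : Fin (n + 1) → ℕ) (hi : ∀ k, 1 ≤ i k) :
    MeasureTheory.volume
        (⋂ k : Fin (n + 1), T^[(k : ℕ)] ⁻¹' Set.Icc ((i k : ℝ) - 1) (i k))
      ≤ ((5 : ENNReal) ^ n)⁻¹ := by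
  induction n with
  | zero =>
    simp only [pow_zero, inv_one]
    calc volume (⋂ k : Fin 1, T^[(k : ℕ)] ⁻¹' Set.Icc ((i k : ℝ) - 1) (i k))
        ≤ volume (Set.Icc ((i 0 : ℝ) - 1) (i 0)) := by
          apply measure_mono
          intro x hx
          have := Set.mem_iInter.mp hx 0
          simpa using this
      _ = 1 := by rw [Real.volume_Icc]; norm_num
  | succ n ih =>
    set j : Fin (n + 1) → ℕ := fun k => i k.succ with hj
    set S : Set ℝ := ⋂ k : Fin (n + 1), T^[(k : ℕ)] ⁻¹' Set.Icc ((j k : ℝ) - 1) (j k) with hS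
    have hdecomp : (⋂ k : Fin (n + 2), T^[(k : ℕ)] ⁻¹' Set.Icc ((i k : ℝ) - 1) (i k))
        = Set.Icc ((i 0 : ℝ) - 1) (i 0) ∩ T ⁻¹' S := by
      ext x
      simp only [Set.mem_iInter, Set.mem_inter_iff, Set.mem_preimage, hS]
      constructor
      · intro h
        refine ⟨by simpa using h 0, ?_⟩
        intro k
        have := h k.succ
        simpa [hj, Function.iterate_succ_apply] using this
      · intro ⟨h0, h1⟩ k
        induction k using Fin.cases with
        | zero => simpa using h0
        | succ k =>
          have := h1 k
          simpa [hj, Function.iterate_succ_apply] using this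
    rw [hdecomp]
    have hm : Set.Icc ((i 0 : ℝ) - 1) (i 0) = Set.Icc ((i 0 - 1 : ℕ) : ℝ) ((i 0 - 1 : ℕ) + 1) := by
      have h1 : 1 ≤ i 0 := hi 0
      have : ((i 0 - 1 : ℕ) : ℝ) = (i 0 : ℝ) - 1 := by
        push_cast [h1]; ring
      rw [this]; congr 1; ring
    rw [hm]
    calc volume (Set.Icc ((i 0 - 1 : ℕ) : ℝ) ((i 0 - 1 : ℕ) + 1) ∩ T ⁻¹' S)
        ≤ 5⁻¹ * volume S := step_lemma T hT (i 0 - 1) S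
      _ ≤ 5⁻¹ * ((5 : ENNReal) ^ n)⁻¹ := by gcongr; exact ih j (fun k => hi k.succ)
      _ = ((5 : ENNReal) ^ (n + 1))⁻¹ := by
          rw [pow_succ, ENNReal.mul_inv (by norm_num) (by norm_num)]; ring
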